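/- Let Θ : ℝ × ℝⁿ → ℝⁿ be of class C² and such that Θ_t := Θ(t,·) is a C² diffeomorphism of ℝⁿ for each t. Let v_B, u_B : ℝ × ℝⁿ → ℝⁿ be of class C¹, and define v_A, u_A : ℝ × ℝⁿ → ℝⁿ by: for y = Θ(t,x), u_A(t,y) := d_xΘ(t,x)·u_B(t,x) (the objective transform, i.e. push-forward, of u_B by Θ_t) and v_A(t,y) := ∂Θ/∂t(t,x) + d_xΘ(t,x)·v_B(t,x) (the velocity addition formula). Assume v_A and u_A are of class C¹. Then the Lie derivative is objective: for all t and x, (ℒ_{v_A} u_A)(t, Θ(t,x)) = d_xΘ(t,x)·(ℒ_{v_B} u_B)(t,x), i.e. ℒ_{v_A} u_A is the push-forward of ℒ_{v_B} u_B by Θ_t. -/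

import Mathlib

noncomputable section

variable {E : Type*} [NormedAddCommGroup E] [NormedSpace ℝ E]

/-- Time partial derivative `∂f/∂t (t,x)` of a time-dependent field. -/
def timeDeriv {F : Type*} [NormedAddCommGroup F] [NormedSpace ℝ F]
    (f : ℝ × E → F) (t : ℝ) (x : E) : F :=
  deriv (fun s => f (s, x)) t

/-- Spatial Fréchet differential `df (t,x)` of a time-dependent field. -/
def spaceDeriv {F : Type*} [NormedAddCommGroup F] [NormedSpace ℝ F]
    (f : ℝ × E → F) (t : ℝ) (x : E) : E →L[ℝ] F :=
  fderiv ℝ (fun y => f (t, y)) x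

/-- Lie derivative of a time-dependent vector field `u` along the velocity field `v`:
`ℒ_v u = ∂u/∂t + du·v − dv·u`. -/
def lieDerivV (v u : ℝ × E → E) : ℝ × E → E := fun q =>
  timeDeriv u q.1 q.2 + spaceDeriv u q.1 q.2 (v q) - spaceDeriv v q.1 q.2 (u q)

theorem timeDeriv_eq' {F : Type*} [NormedAddCommGroup F] [NormedSpace ℝ F]
    {f : ℝ × E → F} {t : ℝ} {x : E} (hf : DifferentiableAt ℝ f (t, x)) :
    timeDeriv f t x = fderiv ℝ f (t, x) (1, 0) := by
  have h1 : HasFDerivAt (fun s : ℝ => (s, x))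
      ((ContinuousLinearMap.id ℝ ℝ).prod (0 : ℝ →L[ℝ] E)) t :=
    (hasFDerivAt_id t).prodMk (hasFDerivAt_const x t)
  have h2 := (hf.hasFDerivAt.comp t h1).hasDerivAt
  simpa [timeDeriv, Function.comp_def] using h2.deriv

theorem spaceDeriv_eq' {F : Type*} [NormedAddCommGroup F] [NormedSpace ℝ F]
    {f : ℝ × E → F} {t : ℝ} {x : E} (hf : DifferentiableAt ℝ f (t, x)) :
    spaceDeriv f t x = (fderiv ℝ f (t, x)).comp (ContinuousLinearMap.inr ℝ ℝ E) := by
  have h1 : HasFDerivAt (fun y : E => ((t, y) : ℝ × E)) (ContinuousLinearMap.inr ℝ ℝ E) x :=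
    (hasFDerivAt_const t x).prodMk (hasFDerivAt_id x)
  exact (hf.hasFDerivAt.comp x h1).fderiv

theorem lieDerivV_eq' {v u : ℝ × E → E} {z : ℝ × E}
    (hu : DifferentiableAt ℝ u z) (hv : DifferentiableAt ℝ v z) :
    lieDerivV v u z = fderiv ℝ u z (1, v z) - fderiv ℝ v z (0, u z) := by
  obtain ⟨t, x⟩ := z
  simp only [lieDerivV]
  rw [timeDeriv_eq' hu, spaceDeriv_eq' hu, spaceDeriv_eq' hv]
  simp only [ContinuousLinearMap.comp_apply, ContinuousLinearMap.inr_apply]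
  rw [← ContinuousLinearMap.map_add]
  congr 2
  simp [Prod.mk_add_mk]

set_option maxHeartbeats 2000000 in
/-- **Objectivity of the Lie derivative.** Let `Θ` be a `C²` translator such that each
`Θ(t,·)` is a `C²` diffeomorphism of `ℝⁿ`. If `u_A` is the objective transform
(push-forward) of `u_B` by `Θ(t,·)` and `v_A` is given by the velocity addition formula
`v_A(t,Θ(t,x)) = ∂Θ/∂t(t,x) + d_xΘ(t,x)·v_B(t,x)`, then `ℒ_{v_A} u_A` is the
push-forward of `ℒ_{v_B} u_B` by `Θ(t,·)`. -/
theorem lie_derivative_objectivity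
    (n : ℕ) (Θ : ℝ × EuclideanSpace ℝ (Fin n) → EuclideanSpace ℝ (Fin n))
    (hΘ : ContDiff ℝ 2 Θ)
    (hdiffeo : ∀ t : ℝ, ∃ Ψ : EuclideanSpace ℝ (Fin n) → EuclideanSpace ℝ (Fin n),
      ContDiff ℝ 2 Ψ ∧ Function.LeftInverse Ψ (fun x => Θ (t, x)) ∧
        Function.RightInverse Ψ (fun x => Θ (t, x)))
    (vB uB vA uA : ℝ × EuclideanSpace ℝ (Fin n) → EuclideanSpace ℝ (Fin n))
    (hvB : ContDiff ℝ 1 vB) (huB : ContDiff ℝ 1 uB)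
    (hvA : ContDiff ℝ 1 vA) (huA : ContDiff ℝ 1 uA)
    (huAdef : ∀ (t : ℝ) (x : EuclideanSpace ℝ (Fin n)),
      uA (t, Θ (t, x)) = spaceDeriv Θ t x (uB (t, x)))
    (hvAdef : ∀ (t : ℝ) (x : EuclideanSpace ℝ (Fin n)),
      vA (t, Θ (t, x)) = timeDeriv Θ t x + spaceDeriv Θ t x (vB (t, x))) :
    ∀ (t : ℝ) (x : EuclideanSpace ℝ (Fin n)),
      lieDerivV vA uA (t, Θ (t, x)) = spaceDeriv Θ t x (lieDerivV vB uB (t, x)) := by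
  intro t x
  have hΘd : Differentiable ℝ Θ := hΘ.differentiable (by norm_num)
  have huAd : Differentiable ℝ uA := huA.differentiable (by norm_num)
  have hvAd : Differentiable ℝ vA := hvA.differentiable (by norm_num)
  have huBd : Differentiable ℝ uB := huB.differentiable (by norm_num)
  have hvBd : Differentiable ℝ vB := hvB.differentiable (by norm_num)
  have hΘ1 : ContDiff ℝ 1 (fderiv ℝ Θ) := hΘ.fderiv_right (le_refl 2)
  set p : ℝ × EuclideanSpace ℝ (Fin n) := (t, x) with hpdef
  set q : ℝ × EuclideanSpace ℝ (Fin n) := (t, Θ p) with hqdef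
  set DΘ := fderiv ℝ Θ p with hDΘ
  set D2 := fderiv ℝ (fderiv ℝ Θ) p with hD2def
  set DuB := fderiv ℝ uB p with hDuBdef
  set DvB := fderiv ℝ vB p with hDvBdef
  set DuA := fderiv ℝ uA q with hDuAdef
  set DvA := fderiv ℝ vA q with hDvAdef
  have hD2 : HasFDerivAt (fderiv ℝ Θ) D2 p :=
    ((hΘ1.differentiable (by norm_num)) p).hasFDerivAt
  have hsymm : ∀ v w, D2 v w = D2 w v :=
    second_derivative_symmetric (fun z => (hΘd z).hasFDerivAt) hD2
  set Φ : ℝ × EuclideanSpace ℝ (Fin n) → ℝ × EuclideanSpace ℝ (Fin n) :=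
    fun z => (z.1, Θ z) with hΦdef
  set Φ' : (ℝ × EuclideanSpace ℝ (Fin n)) →L[ℝ] ℝ × EuclideanSpace ℝ (Fin n) :=
    (ContinuousLinearMap.fst ℝ ℝ (EuclideanSpace ℝ (Fin n))).prod DΘ with hΦ'def
  have hΦ : HasFDerivAt Φ Φ' p := hasFDerivAt_fst.prodMk (hΘd p).hasFDerivAt
  set J : ((ℝ × EuclideanSpace ℝ (Fin n)) →L[ℝ] EuclideanSpace ℝ (Fin n)) →L[ℝ]
      (EuclideanSpace ℝ (Fin n) →L[ℝ] EuclideanSpace ℝ (Fin n)) :=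
    (ContinuousLinearMap.compL ℝ (EuclideanSpace ℝ (Fin n)) (ℝ × EuclideanSpace ℝ (Fin n))
      (EuclideanSpace ℝ (Fin n))).flip
      (ContinuousLinearMap.inr ℝ ℝ (EuclideanSpace ℝ (Fin n))) with hJ
  have hJap : ∀ (L : (ℝ × EuclideanSpace ℝ (Fin n)) →L[ℝ] EuclideanSpace ℝ (Fin n))
      (w : EuclideanSpace ℝ (Fin n)), J L w = L (0, w) := fun L w => rfl
  set c : ℝ × EuclideanSpace ℝ (Fin n) →
      (EuclideanSpace ℝ (Fin n) →L[ℝ] EuclideanSpace ℝ (Fin n)) :=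
    fun z => J (fderiv ℝ Θ z) with hc_def
  have hc : HasFDerivAt c (J.comp D2) p := J.hasFDerivAt.comp p hD2
  have hcs : ∀ z : ℝ × EuclideanSpace ℝ (Fin n), spaceDeriv Θ z.1 z.2 = c z := fun z => by
    rw [hc_def, spaceDeriv_eq' (hΘd (z.1, z.2))]
    ext w; rfl
  -- Equation (I)
  have hguA : HasFDerivAt (fun z => uA (Φ z)) (DuA.comp Φ') p :=
    (huAd q).hasFDerivAt.comp p hΦ
  have heqU : (fun z => uA (Φ z)) = fun z => c z (uB z) := by
    funext z
    have h := huAdef z.1 z.2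
    rw [hcs z] at h
    simpa using h
  have hgU2 : HasFDerivAt (fun z => c z (uB z))
      ((c p).comp DuB + (J.comp D2).flip (uB p)) p :=
    hc.clm_apply (huBd p).hasFDerivAt
  have eqI : DuA.comp Φ' = (c p).comp DuB + (J.comp D2).flip (uB p) :=
    (heqU ▸ hguA).unique hgU2
  -- Equation (II)
  have hgvA : HasFDerivAt (fun z => vA (Φ z)) (DvA.comp Φ') p :=
    (hvAd q).hasFDerivAt.comp p hΦ
  have heqV : (fun z => vA (Φ z))
      = fun z => fderiv ℝ Θ z ((1 : ℝ), (0 : EuclideanSpace ℝ (Fin n))) + c z (vB z) := by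
    funext z
    have h := hvAdef z.1 z.2
    rw [hcs z, timeDeriv_eq' (hΘd (z.1, z.2))] at h
    simpa using h
  have hgV2 : HasFDerivAt
      (fun z => fderiv ℝ Θ z ((1 : ℝ), (0 : EuclideanSpace ℝ (Fin n))) + c z (vB z))
      (((fderiv ℝ Θ p).comp 0 + D2.flip ((1 : ℝ), (0 : EuclideanSpace ℝ (Fin n))))
        + ((c p).comp DvB + (J.comp D2).flip (vB p))) p :=
    (hD2.clm_apply (hasFDerivAt_const ((1 : ℝ), (0 : EuclideanSpace ℝ (Fin n))) p)).add
      (hc.clm_apply (hvBd p).hasFDerivAt)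
  have eqII : DvA.comp Φ' =
      ((fderiv ℝ Θ p).comp 0 + D2.flip ((1 : ℝ), (0 : EuclideanSpace ℝ (Fin n))))
        + ((c p).comp DvB + (J.comp D2).flip (vB p)) :=
    (heqV ▸ hgvA).unique hgV2
  -- pointwise versions
  have key1 : ∀ w : ℝ × EuclideanSpace ℝ (Fin n),
      DuA (w.1, DΘ w) = DΘ (0, DuB w) + (D2 w) (0, uB p) := by
    intro w
    have h := congrFun (congrArg DFunLike.coe eqI) w
    simp only [ContinuousLinearMap.coe_comp', Function.comp_apply,
      ContinuousLinearMap.add_apply, ContinuousLinearMap.flip_apply,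
      ContinuousLinearMap.prod_apply, ContinuousLinearMap.coe_fst'] at h
    exact h
  have key2 : ∀ w : ℝ × EuclideanSpace ℝ (Fin n),
      DvA (w.1, DΘ w) = (D2 w) (1, 0) + (DΘ (0, DvB w) + (D2 w) (0, vB p)) := by
    intro w
    have h := congrFun (congrArg DFunLike.coe eqII) w
    simp only [ContinuousLinearMap.coe_comp', Function.comp_apply,
      ContinuousLinearMap.add_apply, ContinuousLinearMap.flip_apply,
      ContinuousLinearMap.prod_apply, ContinuousLinearMap.coe_fst',
      ContinuousLinearMap.zero_apply, map_zero, zero_add] at h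
    exact h
  -- values of uA, vA at q
  have huAq : uA q = DΘ (0, uB p) := by
    have h := huAdef t x
    rw [hcs (t, x)] at h
    exact h
  have hvAq : vA q = DΘ (1, vB p) := by
    have h := hvAdef t x
    rw [hcs (t, x), timeDeriv_eq' (hΘd (t, x))] at h
    have h2 : vA q = DΘ ((1 : ℝ), (0 : EuclideanSpace ℝ (Fin n))) + DΘ (0, vB p) := h
    rw [h2, ← map_add]
    congr 1
    simp [Prod.ext_iff]
  -- symmetry consequence
  have hsym2 : D2 ((1 : ℝ), vB p) ((0 : ℝ), uB p)
      = D2 ((0 : ℝ), uB p) ((1 : ℝ), (0 : EuclideanSpace ℝ (Fin n)))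
        + D2 ((0 : ℝ), uB p) ((0 : ℝ), vB p) := by
    rw [hsymm]
    have h : ((1 : ℝ), vB p)
        = ((1 : ℝ), (0 : EuclideanSpace ℝ (Fin n))) + ((0 : ℝ), vB p) := by
      rw [Prod.mk_add_mk]; norm_num
    rw [h, map_add]
  -- final computation
  rw [lieDerivV_eq' (huAd q) (hvAd q), lieDerivV_eq' (huBd p) (hvBd p)]
  have hsp : spaceDeriv Θ t x = c p := hcs (t, x)
  rw [hsp, hJap]
  have k1 : DuA ((1 : ℝ), DΘ (1, vB p))
      = DΘ (0, DuB (1, vB p)) + (D2 (1, vB p)) (0, uB p) := key1 (1, vB p)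
  have k2 : DvA ((0 : ℝ), DΘ (0, uB p))
      = (D2 (0, uB p)) (1, 0) + (DΘ (0, DvB (0, uB p)) + (D2 (0, uB p)) (0, vB p)) :=
    key2 (0, uB p)
  rw [hvAq, huAq, k1, k2, hsym2]
  have hsub : ∀ a b : EuclideanSpace ℝ (Fin n),
      DΘ (0, a - b) = DΘ (0, a) - DΘ (0, b) := by
    intro a b
    have h : ((0 : ℝ), a - b) = ((0 : ℝ), a) - ((0 : ℝ), b) := by
      rw [Prod.mk_sub_mk]; norm_num
    rw [h, map_sub]
  rw [hsub]
  abel
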